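/- Let (f_n)_{n≥1} be a sequence of exponentially convex functions on ℝ such that for every real t the limit f(t) = lim_{n→∞} f_n(t) exists (and is finite). Then the limit function f is exponentially convex; in particular, f is continuous on ℝ. -/

import Mathlib

open ComplexOrder Filter

/-- A function `f : ℝ → ℝ` is exponentially convex if it is continuous and all the
quadratic forms `∑ f(t_r + t_s) ξ_r conj(ξ_s)` are nonnegative (real). -/
def ExpConvex (f : ℝ → ℝ) : Prop :=
  Continuous f ∧ ∀ (N : ℕ) (t : Fin N → ℝ) (ξ : Fin N → ℂ),
    0 ≤ ∑ r, ∑ s, (f (t r + t s) : ℂ) * ξ r * (starRingEnd ℂ) (ξ s)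

lemma expconvex_nonneg {g : ℝ → ℝ} (hg : ExpConvex g) (t : ℝ) : 0 ≤ g t := by
  have h := hg.2 1 ![t/2] ![1]
  simp only [Fin.sum_univ_one, Matrix.cons_val_zero] at h
  rw [show t/2 + t/2 = t by ring] at h
  simpa using h

lemma expconvex_quad {g : ℝ → ℝ} (hg : ExpConvex g) (a b x y : ℝ) :
    0 ≤ g (a+a) * x^2 + 2 * g (a+b) * x * y + g (b+b) * y^2 := by
  have h := hg.2 2 ![a, b] ![(x:ℂ), (y:ℂ)]
  simp [Fin.sum_univ_two] at h
  have hab : g (b + a) = g (a + b) := by rw [add_comm]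
  rw [hab] at h
  have : ((0:ℝ):ℂ) ≤ ((g (a+a) * x^2 + 2 * g (a+b) * x * y + g (b+b) * y^2 : ℝ) : ℂ) := by
    push_cast
    convert h using 1
    ring
  exact_mod_cast this

lemma expconvex_sq {g : ℝ → ℝ} (hg : ExpConvex g) (u h : ℝ) :
    g u ^ 2 ≤ g (u + h) * g (u - h) := by
  have A := expconvex_nonneg hg (u + h)
  have C := expconvex_nonneg hg (u - h)
  have key : ∀ x y : ℝ, 0 ≤ g (u+h) * x^2 + 2 * g u * x * y + g (u-h) * y^2 := by
    intro x y
    have := expconvex_quad hg ((u+h)/2) ((u-h)/2) x y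
    rwa [show (u+h)/2 + (u+h)/2 = u + h by ring, show (u-h)/2 + (u-h)/2 = u - h by ring,
      show (u+h)/2 + (u-h)/2 = u by ring] at this
  rcases eq_or_lt_of_le A with hA | hA
  · have hB : g u = 0 := by
      by_contra hB
      have := key (-(g (u-h) + 1) / (2 * g u)) 1
      rw [← hA] at this
      field_simp at this
      have hgu : 0 < g u ^ 2 := lt_of_le_of_ne (sq_nonneg _) (Ne.symm (pow_ne_zero 2 hB))
      rw [le_div_iff₀ hgu] at this
      nlinarith
    rw [hB]; rw [← hA]; nlinarith
  · have := key (g u) (-(g (u+h)))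
    nlinarith

lemma expconvex_midpoint {g : ℝ → ℝ} (hg : ExpConvex g) (x y : ℝ) :
    g ((x + y) / 2) ≤ (g x + g y) / 2 := by
  have h := expconvex_sq hg ((x+y)/2) ((x-y)/2)
  rw [show (x+y)/2 + (x-y)/2 = x by ring, show (x+y)/2 - (x-y)/2 = y by ring] at h
  have h1 := expconvex_nonneg hg ((x+y)/2)
  have h2 := expconvex_nonneg hg x
  have h3 := expconvex_nonneg hg y
  nlinarith [sq_nonneg (g x - g y)]

lemma dyadic_convex {g : ℝ → ℝ} (hm : ∀ x y : ℝ, g ((x + y) / 2) ≤ (g x + g y) / 2) :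
    ∀ n : ℕ, ∀ k : ℕ, k ≤ 2 ^ n → ∀ x y : ℝ,
      g (((k : ℝ) * x + ((2:ℝ)^n - (k:ℝ)) * y) / (2:ℝ)^n) ≤
        ((k : ℝ) * g x + ((2:ℝ)^n - (k:ℝ)) * g y) / (2:ℝ)^n := by
  intro n
  induction n with
  | zero =>
    intro k hk x y
    interval_cases k <;> norm_num
  | succ n ih =>
    intro k hk x y
    obtain ⟨k₁, k₂, hk₁, hk₂, rfl⟩ : ∃ k₁ k₂, k₁ ≤ 2^n ∧ k₂ ≤ 2^n ∧ k₁ + k₂ = k :=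
      ⟨min k (2 ^ n), k - min k (2 ^ n), by omega, by omega, by omega⟩
    have h2n : (2:ℝ) ^ n ≠ 0 := by positivity
    have h1 := ih k₁ hk₁ x y
    have h2 := ih k₂ hk₂ x y
    have hmid := hm (((k₁ : ℝ) * x + ((2:ℝ)^n - (k₁:ℝ)) * y) / (2:ℝ)^n)
                    (((k₂ : ℝ) * x + ((2:ℝ)^n - (k₂:ℝ)) * y) / (2:ℝ)^n)
    have e1 : (((k₁ : ℝ) * x + ((2:ℝ)^n - (k₁:ℝ)) * y) / (2:ℝ)^n +
        ((k₂ : ℝ) * x + ((2:ℝ)^n - (k₂:ℝ)) * y) / (2:ℝ)^n) / 2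
        = (((k₁ + k₂ : ℕ) : ℝ) * x + ((2:ℝ)^(n+1) - ((k₁ + k₂ : ℕ):ℝ)) * y) / (2:ℝ)^(n+1) := by
      push_cast
      field_simp
      ring
    have e2 : ((((k₁ : ℝ) * g x + ((2:ℝ)^n - (k₁:ℝ)) * g y) / (2:ℝ)^n) +
        (((k₂ : ℝ) * g x + ((2:ℝ)^n - (k₂:ℝ)) * g y) / (2:ℝ)^n)) / 2
        = (((k₁ + k₂ : ℕ) : ℝ) * g x + ((2:ℝ)^(n+1) - ((k₁ + k₂ : ℕ):ℝ)) * g y) / (2:ℝ)^(n+1) := by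
      push_cast
      field_simp
      ring
    rw [e1] at hmid
    rw [← e2]
    exact hmid.trans (by linarith)

lemma convexOn_of_midpoint {g : ℝ → ℝ} (hc : Continuous g)
    (hm : ∀ x y : ℝ, g ((x + y) / 2) ≤ (g x + g y) / 2) :
    ConvexOn ℝ Set.univ g := by
  refine ⟨convex_univ, fun x _ y _ a b ha hb hab => ?_⟩
  -- reduce to a ∈ [0,1], b = 1 - a
  have hb' : b = 1 - a := by linarith
  subst hb'
  have ha1 : a ≤ 1 := by linarith
  -- dyadic approximation of a
  simp only [smul_eq_mul]
  set u : ℕ → ℝ := fun n => (⌊a * 2 ^ n⌋₊ : ℝ) / 2 ^ n with hu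
  have hupos : ∀ n : ℕ, (0:ℝ) < 2 ^ n := fun n => by positivity
  have hle : ∀ n, u n ≤ a := by
    intro n
    rw [hu]
    rw [div_le_iff₀ (hupos n)]
    exact Nat.floor_le (by positivity)
  have hge : ∀ n, a - (1/2) ^ n ≤ u n := by
    intro n
    rw [hu]
    rw [le_div_iff₀ (hupos n)]
    have := Nat.sub_one_lt_floor (a * 2 ^ n)
    have : a * 2 ^ n - 1 ≤ (⌊a * 2 ^ n⌋₊ : ℝ) := this.le
    have hpow : ((1:ℝ)/2) ^ n * 2 ^ n = 1 := by
      rw [div_pow, one_pow, div_mul_cancel₀]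
      positivity
    nlinarith
  have hun : Tendsto u atTop (nhds a) := by
    refine tendsto_of_tendsto_of_tendsto_of_le_of_le ?_ tendsto_const_nhds hge hle
    have : Tendsto (fun n : ℕ => ((1:ℝ)/2) ^ n) atTop (nhds 0) :=
      tendsto_pow_atTop_nhds_zero_of_lt_one (by norm_num) (by norm_num)
    simpa using tendsto_const_nhds.sub this
  have hn : ∀ n, g (u n * x + (1 - u n) * y) ≤ u n * g x + (1 - u n) * g y := by
    intro n
    have hk : ⌊a * 2 ^ n⌋₊ ≤ 2 ^ n := by
      have : a * 2 ^ n ≤ (2:ℝ) ^ n := by nlinarith [hupos n]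
      calc ⌊a * 2 ^ n⌋₊ ≤ ⌊((2:ℝ)^n)⌋₊ := Nat.floor_le_floor this
        _ = 2 ^ n := by exact_mod_cast Nat.floor_natCast (R := ℝ) (2 ^ n)
    have h := dyadic_convex hm n ⌊a * 2 ^ n⌋₊ hk x y
    have e1 : ((⌊a * 2 ^ n⌋₊ : ℝ) * x + ((2:ℝ)^n - (⌊a * 2 ^ n⌋₊:ℝ)) * y) / (2:ℝ)^n
        = u n * x + (1 - u n) * y := by
      rw [hu]
      field_simp
    have e2 : ((⌊a * 2 ^ n⌋₊ : ℝ) * g x + ((2:ℝ)^n - (⌊a * 2 ^ n⌋₊:ℝ)) * g y) / (2:ℝ)^n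
        = u n * g x + (1 - u n) * g y := by
      rw [hu]
      field_simp
    rwa [e1, e2] at h
  have hL : Tendsto (fun n => g (u n * x + (1 - u n) * y)) atTop (nhds (g (a * x + (1 - a) * y))) := by
    exact (hc.tendsto _).comp ((hun.mul_const x).add ((tendsto_const_nhds.sub hun).mul_const y))
  have hR : Tendsto (fun n => u n * g x + (1 - u n) * g y) atTop
      (nhds (a * g x + (1 - a) * g y)) :=
    (hun.mul_const (g x)).add ((tendsto_const_nhds.sub hun).mul_const (g y))
  exact le_of_tendsto_of_tendsto' hL hR hn

theorem stmt10 (fn : ℕ → ℝ → ℝ) (hfn : ∀ n : ℕ, ExpConvex (fn n))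
    (f : ℝ → ℝ) (hlim : ∀ t : ℝ, Tendsto (fun n : ℕ => fn n t) atTop (nhds (f t))) :
    ExpConvex f := by
  have hconvn : ∀ n, ConvexOn ℝ Set.univ (fn n) := fun n =>
    convexOn_of_midpoint (hfn n).1 (expconvex_midpoint (hfn n))
  have hconv : ConvexOn ℝ Set.univ f := by
    refine ⟨convex_univ, fun x _ y _ a b ha hb hab => ?_⟩
    refine le_of_tendsto_of_tendsto' (f := fun n => fn n (a • x + b • y))
      (g := fun n => a • fn n x + b • fn n y) (hlim _) ?_ ?_
    · simp only [smul_eq_mul]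
      exact ((hlim x).const_mul a).add ((hlim y).const_mul b)
    · exact fun n => (hconvn n).2 (Set.mem_univ x) (Set.mem_univ y) ha hb hab
  have hcont : Continuous f := by
    rw [← continuousOn_univ]
    exact hconv.continuousOn isOpen_univ
  refine ⟨hcont, fun N t ξ => ?_⟩
  have hS : Tendsto
      (fun n => ∑ r, ∑ s, (fn n (t r + t s) : ℂ) * ξ r * (starRingEnd ℂ) (ξ s)) atTop
      (nhds (∑ r, ∑ s, (f (t r + t s) : ℂ) * ξ r * (starRingEnd ℂ) (ξ s))) := by
    refine tendsto_finset_sum _ fun r _ => tendsto_finset_sum _ fun s _ => ?_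
    exact (((Complex.continuous_ofReal.tendsto _).comp (hlim (t r + t s))).mul_const
      (ξ r)).mul_const ((starRingEnd ℂ) (ξ s))
  exact le_of_tendsto_of_tendsto' tendsto_const_nhds hS fun n => (hfn n).2 N t ξ
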